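/- The map x ↦ (Arg(x), Arg((x+1)/(1−x))), where Arg denotes the principal argument, restricts to a bijection from the open upper half-plane {x ∈ ℂ : Im(x) > 0} onto the open square (0,π) × (0,π), and to a bijection from the open lower half-plane {x ∈ ℂ : Im(x) < 0} onto the open square (−π,0) × (−π,0). -/

import Mathlib

open Real

lemma aux_arg_mem (z : ℂ) (hz : 0 < z.im) : Complex.arg z ∈ Set.Ioo 0 π := by
  constructor
  · by_contra h
    push_neg at h
    have h1 : -π ≤ Complex.arg z := (Complex.neg_pi_lt_arg z).le
    have h2 : Real.sin (Complex.arg z) ≤ 0 := Real.sin_nonpos_of_nonpos_of_neg_pi_le h h1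
    rw [Complex.sin_arg] at h2
    have hz0 : z ≠ 0 := fun h => by simp [h] at hz
    have : 0 < z.im / ‖z‖ := div_pos hz (norm_pos_iff.mpr hz0)
    linarith
  · exact Complex.arg_lt_pi_iff.2 (Or.inr hz.ne')

lemma aux_arg_eq (z : ℂ) (hz : 0 < z.im) (φ : ℝ) (hφ : φ ∈ Set.Ioo 0 π)
    (h : z.re * Real.sin φ = z.im * Real.cos φ) : Complex.arg z = φ := by
  have hs : 0 < Real.sin φ := Real.sin_pos_of_pos_of_lt_pi hφ.1 hφ.2
  have hzz : z = ((z.im / Real.sin φ : ℝ) : ℂ) *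
      ((Real.cos φ : ℂ) + (Real.sin φ : ℂ) * Complex.I) := by
    apply Complex.ext <;>
      simp only [Complex.mul_re, Complex.mul_im, Complex.add_re, Complex.add_im,
        Complex.ofReal_re, Complex.ofReal_im, Complex.mul_re, Complex.mul_im,
        Complex.I_re, Complex.I_im, mul_zero, mul_one, zero_mul, sub_zero, add_zero, zero_add,
        zero_sub, neg_zero] <;> field_simp <;> linarith
  rw [hzz, Complex.arg_real_mul _ (div_pos hz hs), Complex.ofReal_cos, Complex.ofReal_sin,
    Complex.arg_cos_add_sin_mul_I ⟨by linarith [hφ.1, Real.pi_pos], hφ.2.le⟩]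

lemma aux_div (x : ℂ) (hx : x.im ≠ 0) :
    (x + 1) / (1 - x) = (((Complex.normSq (1 - x))⁻¹ : ℝ) : ℂ) *
      (((1 - Complex.normSq x : ℝ) : ℂ) + ((2 * x.im : ℝ) : ℂ) * Complex.I) := by
  have h1 : (1 : ℂ) - x ≠ 0 := by
    intro h
    have : x = 1 := by linear_combination -h
    rw [this] at hx; simp at hx
  have hn : (Complex.normSq (1 - x) : ℂ) ≠ 0 := by
    simpa using (Complex.normSq_pos.2 h1).ne'
  rw [div_eq_iff h1, Complex.ofReal_inv]
  rw [inv_mul_eq_div, div_mul_eq_mul_div, eq_div_iff hn]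
  simp only [Complex.ext_iff, Complex.mul_re, Complex.mul_im, Complex.add_re, Complex.add_im,
    Complex.sub_re, Complex.sub_im, Complex.one_re, Complex.one_im, Complex.ofReal_re,
    Complex.ofReal_im, Complex.I_re, Complex.I_im, Complex.normSq_apply]
  constructor <;> ring

lemma aux_one_sub_ne (x : ℂ) (hx : x.im ≠ 0) : (1 : ℂ) - x ≠ 0 := by
  intro h
  have : x = 1 := by linear_combination -h
  rw [this] at hx; simp at hx

lemma aux_arg_div (x : ℂ) (hx : x.im ≠ 0) :
    Complex.arg ((x + 1) / (1 - x)) =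
      Complex.arg (((1 - Complex.normSq x : ℝ) : ℂ) + ((2 * x.im : ℝ) : ℂ) * Complex.I) := by
  rw [aux_div x hx]
  exact Complex.arg_real_mul _ (inv_pos.2 (Complex.normSq_pos.2 (aux_one_sub_ne x hx)))

lemma aux_im_div (x : ℂ) (hx : x.im ≠ 0) :
    ((x + 1) / (1 - x)).im = (Complex.normSq (1 - x))⁻¹ * (2 * x.im) := by
  rw [aux_div x hx]; simp

lemma aux_ratio {z w : ℂ} (hz : z ≠ 0) (hw : w ≠ 0) (h : Complex.arg z = Complex.arg w) :
    w = ((‖w‖ / ‖z‖ : ℝ) : ℂ) * z := by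
  have habs : (‖z‖ : ℝ) ≠ 0 := norm_ne_zero_iff.mpr hz
  have hcast : ((‖w‖ / ‖z‖ : ℝ) : ℂ) * (‖z‖ : ℂ) =
      (‖w‖ : ℂ) := by
    push_cast
    exact div_mul_cancel₀ _ (by exact_mod_cast habs)
  calc w = ↑(‖w‖) * Complex.exp (Complex.arg w * Complex.I) :=
        (Complex.norm_mul_exp_arg_mul_I w).symm
    _ = ↑(‖w‖ / ‖z‖) *
        (↑(‖z‖) * Complex.exp (Complex.arg z * Complex.I)) := by
        rw [← mul_assoc, hcast, h]
    _ = ↑(‖w‖ / ‖z‖) * z := by rw [Complex.norm_mul_exp_arg_mul_I]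

lemma aux_normSq_point (r θ : ℝ) :
    Complex.normSq ((r : ℂ) * ((Real.cos θ : ℂ) + (Real.sin θ : ℂ) * Complex.I)) = r ^ 2 := by
  simp only [Complex.normSq_apply, Complex.mul_re, Complex.mul_im, Complex.add_re,
    Complex.add_im, Complex.ofReal_re, Complex.ofReal_im, Complex.I_re, Complex.I_im,
    mul_zero, mul_one, zero_mul, sub_zero, add_zero, zero_add]
  nlinarith [Real.sin_sq_add_cos_sq θ]

lemma bij_upper :
    Set.BijOn (fun x : ℂ => (Complex.arg x, Complex.arg ((x + 1) / (1 - x))))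
      {x : ℂ | 0 < x.im} (Set.Ioo 0 π ×ˢ Set.Ioo 0 π) := by
  refine ⟨?_, ?_, ?_⟩
  · -- MapsTo
    intro x hx
    simp only [Set.mem_setOf_eq] at hx
    dsimp only
    refine ⟨aux_arg_mem x hx, ?_⟩
    rw [aux_arg_div x hx.ne']
    apply aux_arg_mem
    simp
    linarith
  · -- InjOn
    intro x hx x' hx' heq
    simp only [Set.mem_setOf_eq] at hx hx'
    have h1 : Complex.arg x = Complex.arg x' := congrArg Prod.fst heq
    have h2 : Complex.arg ((x + 1) / (1 - x)) = Complex.arg ((x' + 1) / (1 - x')) :=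
      congrArg Prod.snd heq
    rw [aux_arg_div x hx.ne', aux_arg_div x' hx'.ne'] at h2
    have hx0 : x ≠ 0 := fun h => by simp [h] at hx
    have hx'0 : x' ≠ 0 := fun h => by simp [h] at hx'
    set c : ℝ := ‖x'‖ / ‖x‖ with hc_def
    have hc : 0 < c := div_pos (norm_pos_iff.mpr hx'0) (norm_pos_iff.mpr hx0)
    have e1 : x' = (c : ℂ) * x := aux_ratio hx0 hx'0 h1
    set g : ℂ := ((1 - Complex.normSq x : ℝ) : ℂ) + ((2 * x.im : ℝ) : ℂ) * Complex.I with hg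
    set g' : ℂ := ((1 - Complex.normSq x' : ℝ) : ℂ) + ((2 * x'.im : ℝ) : ℂ) * Complex.I with hg'
    have hgim : g.im = 2 * x.im := by simp [hg]
    have hg'im : g'.im = 2 * x'.im := by simp [hg']
    have hgre : g.re = 1 - Complex.normSq x := by simp [hg]
    have hg're : g'.re = 1 - Complex.normSq x' := by simp [hg']
    have hg0 : g ≠ 0 := fun h => by
      have := congrArg Complex.im h; rw [hgim] at this; simp at this; linarith
    have hg'0 : g' ≠ 0 := fun h => by
      have := congrArg Complex.im h; rw [hg'im] at this; simp at this; linarith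
    set μ : ℝ := ‖g'‖ / ‖g‖ with hμ_def
    have hμ : 0 < μ := div_pos (norm_pos_iff.mpr hg'0) (norm_pos_iff.mpr hg0)
    have e2 : g' = (μ : ℂ) * g := aux_ratio hg0 hg'0 h2
    -- imaginary parts
    have eim : x'.im = c * x.im := by
      have := congrArg Complex.im e1; simpa using this
    have eim2 : 2 * x'.im = μ * (2 * x.im) := by
      have := congrArg Complex.im e2
      rw [hg'im] at this; simpa [hgim] using this
    have hμc : μ = c := by
      have : μ * x.im = c * x.im := by linarith
      exact mul_right_cancel₀ hx.ne' this
    -- real parts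
    have ere : 1 - Complex.normSq x' = μ * (1 - Complex.normSq x) := by
      have := congrArg Complex.re e2
      rw [hg're] at this; simpa [hgre] using this
    have hns : Complex.normSq x' = c ^ 2 * Complex.normSq x := by
      rw [e1, Complex.normSq_mul, Complex.normSq_ofReal]; ring
    have hN : 0 < Complex.normSq x := Complex.normSq_pos.2 hx0
    have hc1 : c = 1 := by
      rw [hμc, hns] at ere
      have key : (c - 1) * (1 + c * Complex.normSq x) = 0 := by linear_combination -ere
      rcases mul_eq_zero.1 key with h | h
      · linarith
      · nlinarith
    rw [e1, hc1]; simp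
  · -- SurjOn
    rintro ⟨θ, φ⟩ hp
    obtain ⟨hθ, hφ⟩ := hp
    simp only [Set.mem_Ioo] at hθ hφ
    have hs : 0 < Real.sin θ := Real.sin_pos_of_pos_of_lt_pi hθ.1 hθ.2
    have hsφ : 0 < Real.sin φ := Real.sin_pos_of_pos_of_lt_pi hφ.1 hφ.2
    set s := Real.sin θ with hs_def
    set D := s ^ 2 * (Real.cos φ) ^ 2 + (Real.sin φ) ^ 2 with hD_def
    have hD : 0 ≤ D := by positivity
    have hsq : Real.sqrt D ^ 2 = D := Real.sq_sqrt hD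
    have hlt : s * Real.cos φ < Real.sqrt D := by
      nlinarith [Real.sqrt_nonneg D, hsq, hsφ]
    set r : ℝ := (-(s * Real.cos φ) + Real.sqrt D) / Real.sin φ with hr_def
    have hr : 0 < r := div_pos (by linarith) hsφ
    have key : (1 - r ^ 2) * Real.sin φ = 2 * r * s * Real.cos φ := by
      rw [hr_def]
      field_simp
      nlinarith [hsq]
    set x : ℂ := (r : ℂ) * ((Real.cos θ : ℂ) + (Real.sin θ : ℂ) * Complex.I) with hx_def
    have hxim : x.im = r * s := by
      rw [hx_def]
      simp only [Complex.mul_im, Complex.add_re, Complex.add_im, Complex.ofReal_re,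
        Complex.ofReal_im, Complex.mul_re, Complex.I_re, Complex.I_im, mul_zero, mul_one,
        zero_mul, sub_zero, add_zero, zero_add]
      rfl
    have hx : 0 < x.im := by rw [hxim]; positivity
    refine ⟨x, hx, ?_⟩
    have harg : Complex.arg x = θ := by
      rw [hx_def, Complex.arg_real_mul _ hr, Complex.ofReal_cos, Complex.ofReal_sin,
        Complex.arg_cos_add_sin_mul_I ⟨by linarith [Real.pi_pos], hθ.2.le⟩]
    have hns : Complex.normSq x = r ^ 2 := aux_normSq_point r θ
    have harg2 : Complex.arg ((x + 1) / (1 - x)) = φ := by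
      rw [aux_arg_div x hx.ne']
      refine aux_arg_eq _ ?_ _ ⟨hφ.1, hφ.2⟩ ?_
      · have h2im : (((1 - Complex.normSq x : ℝ) : ℂ) + ((2 * x.im : ℝ) : ℂ) * Complex.I).im
            = 2 * x.im := by simp
        rw [h2im]; linarith
      · rw [hns]
        simp only [Complex.add_re, Complex.add_im, Complex.ofReal_re, Complex.ofReal_im,
          Complex.mul_re, Complex.mul_im, Complex.I_re, Complex.I_im, mul_zero, mul_one,
          zero_mul, sub_zero, add_zero, zero_add, zero_sub]
        rw [hxim]
        linarith [key]
    simp [harg, harg2]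

lemma aux_arg_conj (z : ℂ) (hz : z.im ≠ 0) :
    Complex.arg ((starRingEnd ℂ) z) = -Complex.arg z := by
  rw [Complex.arg_conj, if_neg]
  intro h
  exact hz (Complex.arg_eq_pi_iff.1 h).2

lemma bij_conj : Set.BijOn (fun z : ℂ => (starRingEnd ℂ) z) {x : ℂ | x.im < 0} {x : ℂ | 0 < x.im} := by
  refine ⟨?_, ?_, ?_⟩
  · intro x hx
    simp only [Set.mem_setOf_eq] at hx ⊢
    simp [Complex.conj_im]
    linarith
  · intro x _ y _ h
    exact (starRingEnd ℂ).injective h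
  · intro y hy
    simp only [Set.mem_setOf_eq] at hy
    refine ⟨(starRingEnd ℂ) y, ?_, by simp⟩
    simp only [Set.mem_setOf_eq, Complex.conj_im]
    linarith

lemma bij_neg : Set.BijOn (fun p : ℝ × ℝ => (-p.1, -p.2))
    (Set.Ioo 0 π ×ˢ Set.Ioo 0 π) (Set.Ioo (-π) 0 ×ˢ Set.Ioo (-π) 0) := by
  refine ⟨?_, ?_, ?_⟩
  · rintro ⟨a, b⟩ ⟨ha, hb⟩
    simp only [Set.mem_Ioo] at ha hb
    dsimp only
    constructor <;> simp only [Set.mem_Ioo] <;>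
      exact ⟨by linarith [ha.2, hb.2], by linarith [ha.1, hb.1]⟩
  · rintro ⟨a, b⟩ _ ⟨c, d⟩ _ h
    simp only [Prod.mk.injEq, neg_inj] at h ⊢
    exact h
  · rintro ⟨a, b⟩ ⟨ha, hb⟩
    simp only [Set.mem_Ioo] at ha hb
    refine ⟨(-a, -b), ?_, by simp⟩
    constructor <;> simp only [Set.mem_Ioo] <;>
      exact ⟨by linarith [ha.2, hb.2], by linarith [ha.1, hb.1]⟩

lemma bij_lower :
    Set.BijOn (fun x : ℂ => (Complex.arg x, Complex.arg ((x + 1) / (1 - x))))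
      {x : ℂ | x.im < 0} (Set.Ioo (-π) 0 ×ˢ Set.Ioo (-π) 0) := by
  have hcomp := (bij_neg.comp bij_upper).comp bij_conj
  refine hcomp.congr ?_
  intro x hx
  simp only [Set.mem_setOf_eq] at hx
  have hxim : x.im ≠ 0 := hx.ne
  have h1 : ((starRingEnd ℂ) x + 1) / (1 - (starRingEnd ℂ) x) =
      (starRingEnd ℂ) ((x + 1) / (1 - x)) := by
    simp [map_div₀]
  have hwim : ((x + 1) / (1 - x)).im ≠ 0 := by
    rw [aux_im_div x hxim]
    have := Complex.normSq_pos.2 (aux_one_sub_ne x hxim)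
    intro h
    rcases mul_eq_zero.1 h with h' | h'
    · exact (inv_pos.2 this).ne' h'
    · exact hxim (by linarith)
  simp only [Function.comp_apply, h1, aux_arg_conj _ hxim, aux_arg_conj _ hwim, neg_neg]


/-- The map `x ↦ (Arg x, Arg((x+1)/(1-x)))` (principal arguments) restricts to a
bijection from the open upper half-plane onto `(0,π) × (0,π)`, and to a bijection
from the open lower half-plane onto `(-π,0) × (-π,0)`. -/
theorem arg_map_bijOn_half_planes :
    Set.BijOn (fun x : ℂ => (Complex.arg x, Complex.arg ((x + 1) / (1 - x))))
      {x : ℂ | 0 < x.im} (Set.Ioo 0 π ×ˢ Set.Ioo 0 π) ∧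
    Set.BijOn (fun x : ℂ => (Complex.arg x, Complex.arg ((x + 1) / (1 - x))))
      {x : ℂ | x.im < 0} (Set.Ioo (-π) 0 ×ˢ Set.Ioo (-π) 0) := by
  exact ⟨bij_upper, bij_lower⟩
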